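/- arXiv:0704.1379 — 2 statements merged into one kernel-verified Lean document; each statement's English description precedes it below -/
import Mathlib

section
/- Under the conditions of the Silverman–Brown corollary — i.e. if z_n: T → ℝ satisfies lim_n C(n,k)·P(h(ξ₁,…,ξ_k) > z_n(t)) = λ_t > 0 and lim_n n^{2k−1} P(h(ξ₁,…,ξ_k) > z_n(t)) · P(h(ξ₁,…,ξ_k) > z_n(t), h(ξ₂,…,ξ_{k+1}) > z_n(t))/P(h(ξ₁,…,ξ_k) > z_n(t)) = 0 for all t ∈ T — then lim_{n→∞} P(H_n ≤ z_n(t)) = exp{−λ_t} for all t ∈ T, assuming the Poisson approximation bound of Theorem 1 holds. -/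
open MeasureTheory ProbabilityTheory Filter Real

set_option linter.unusedSectionVars false
set_option linter.unusedVariables false

section Core

variable {S : Type*} [MeasurableSpace S] (ν : Measure S) [IsProbabilityMeasure ν]
variable {k : ℕ} {h : (Fin k → S) → ℝ} {z : ℝ}

/-- Jensen / Cauchy-Schwarz for lintegral over a probability measure. -/
lemma lintegral_sq_le' {α : Type*} [MeasurableSpace α] (μ : Measure α) [IsProbabilityMeasure μ]
    (f : α → ENNReal) (hf : Measurable f) :
    (∫⁻ a, f a ∂μ) ^ 2 ≤ ∫⁻ a, (f a) ^ 2 ∂μ := by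
  have hpq : Real.HolderConjugate 2 2 := by constructor <;> norm_num
  have h1 : (∫⁻ a, f a * (fun _ => (1:ENNReal)) a ∂μ) ≤
      (∫⁻ a, f a ^ (2:ℝ) ∂μ) ^ (1/(2:ℝ)) * (∫⁻ a, ((fun _ => (1:ENNReal)) a) ^ (2:ℝ) ∂μ) ^ (1/(2:ℝ)) :=
    ENNReal.lintegral_mul_le_Lp_mul_Lq μ hpq hf.aemeasurable aemeasurable_const
  simp only [mul_one, ENNReal.one_rpow, lintegral_const, measure_univ, one_mul,
    ENNReal.one_rpow] at h1
  have h1' : (∫⁻ a, f a ∂μ) ≤ (∫⁻ a, f a ^ (2:ℝ) ∂μ) ^ (1/(2:ℝ)) := by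
    simpa using h1
  calc (∫⁻ a, f a ∂μ) ^ 2 ≤ ((∫⁻ a, f a ^ (2:ℝ) ∂μ) ^ (1/(2:ℝ))) ^ 2 := by
        gcongr
    _ = ∫⁻ a, (f a) ^ 2 ∂μ := by
        rw [← ENNReal.rpow_natCast (((∫⁻ a, f a ^ (2:ℝ) ∂μ) ^ (1/(2:ℝ)))) 2,
          ← ENNReal.rpow_mul]
        norm_num

/-- Splitting a lintegral over a pi type on a sum index. -/
lemma lintegral_sum_split {ι₁ ι₂ : Type*} [Fintype ι₁] [Fintype ι₂]
    (F : ((ι₁ ⊕ ι₂) → S) → ENNReal) (hF : Measurable F) :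
    ∫⁻ x, F x ∂(Measure.pi fun _ : ι₁ ⊕ ι₂ => ν)
      = ∫⁻ x, ∫⁻ y, F (Sum.elim x y) ∂(Measure.pi fun _ : ι₂ => ν)
          ∂(Measure.pi fun _ : ι₁ => ν) := by
  rw [← (measurePreserving_sumPiEquivProdPi_symm (fun _ : ι₁ ⊕ ι₂ => ν)).lintegral_comp hF]
  rw [show (fun a => F ((MeasurableEquiv.sumPiEquivProdPi fun _ : ι₁ ⊕ ι₂ => S).symm a))
      = (F ∘ (MeasurableEquiv.sumPiEquivProdPi fun _ : ι₁ ⊕ ι₂ => S).symm) from rfl] at *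
  rw [lintegral_prod _ (hF.comp (MeasurableEquiv.sumPiEquivProdPi _).symm.measurable).aemeasurable]
  refine lintegral_congr fun x => lintegral_congr fun y => ?_
  congr 1

lemma measurable_sum_elim_left {ι₁ ι₂ : Type*} (x : ι₁ → S) :
    Measurable (fun (y : ι₂ → S) => Sum.elim x y) := by
  apply measurable_pi_lambda
  rintro (i | i)
  · exact measurable_const
  · exact measurable_pi_apply i

/-- Set version of `lintegral_sum_split`. -/
lemma measure_sum_split {ι₁ ι₂ : Type*} [Fintype ι₁] [Fintype ι₂]
    (C : Set ((ι₁ ⊕ ι₂) → S)) (hC : MeasurableSet C) :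
    (Measure.pi fun _ : ι₁ ⊕ ι₂ => ν) C
      = ∫⁻ x, (Measure.pi fun _ : ι₂ => ν) {y | Sum.elim x y ∈ C}
          ∂(Measure.pi fun _ : ι₁ => ν) := by
  rw [← lintegral_indicator_one hC, lintegral_sum_split ν _ ((measurable_one).indicator hC)]
  congr 1; ext x
  rw [show {y | Sum.elim x y ∈ C} = (fun (y : ι₂ → S) => Sum.elim x y) ⁻¹' C from rfl,
    ← lintegral_indicator_one ((measurable_sum_elim_left x) hC)]
  rfl

/-- Reindexing a lintegral over a pi type along an equiv. -/
lemma lintegral_reindex {ι₁ ι₂ : Type*} [Fintype ι₁] [Fintype ι₂] (e : ι₁ ≃ ι₂)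
    (F : (ι₂ → S) → ENNReal) (hF : Measurable F) :
    ∫⁻ y, F y ∂(Measure.pi fun _ : ι₂ => ν)
      = ∫⁻ x, F (fun j => x (e.symm j)) ∂(Measure.pi fun _ : ι₁ => ν) := by
  rw [← (measurePreserving_piCongrLeft (fun _ : ι₂ => ν) e).lintegral_comp hF]
  congr 1; ext x; congr 1
  ext j
  have := Equiv.piCongrLeft_apply_apply (fun _ : ι₂ => S) e x (e.symm j)
  simp only [Equiv.apply_symm_apply] at this
  exact this.trans rfl



lemma hperm (hsymm : ∀ (σ : Equiv.Perm (Fin k)) (x : Fin k → S), h (x ∘ σ) = h x)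
    {ι : Type*} (c₁ c₂ : Fin k ≃ ι) (x : ι → S) :
    h (fun j => x (c₁ j)) = h (fun j => x (c₂ j)) := by
  have := hsymm (c₂.trans c₁.symm) (fun j => x (c₁ j))
  rw [show ((fun j => x (c₁ j)) ∘ (c₂.trans c₁.symm)) = fun j => x (c₂ j) by
    ext j; simp] at this
  exact this.symm

lemma measurable_happly (hmeas_h : Measurable h) {ι : Type*} (u : Fin k → ι) :
    Measurable fun (x : ι → S) => h (fun j => x (u j)) :=
  hmeas_h.comp (measurable_pi_lambda _ fun j => measurable_pi_apply _)

lemma measurable_helim (hmeas_h : Measurable h) {ι ι' : Type*} (xs : ι → S)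
    (u : Fin k → ι ⊕ ι') :
    Measurable fun (y : ι' → S) => h (fun j => Sum.elim xs y (u j)) := by
  refine hmeas_h.comp (measurable_pi_lambda _ fun j => ?_)
  rcases hu : u j with i | i
  · exact measurable_const
  · exact measurable_pi_apply i

/-- Conditional "tail" probability over the second block. -/
noncomputable def GG (k : ℕ) (h : (Fin k → S) → ℝ) (z : ℝ) {ι₁ ι₂ : Type*} [Fintype ι₂]
    (c : Fin k ≃ ι₁ ⊕ ι₂) (xs : ι₁ → S) : ENNReal :=
  (Measure.pi fun _ : ι₂ => ν) {y | z < h (fun j => Sum.elim xs y (c j))}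

lemma GG_congr (hsymm : ∀ (σ : Equiv.Perm (Fin k)) (x : Fin k → S), h (x ∘ σ) = h x)
    {ι₁ ι₂ : Type*} [Fintype ι₂] (c₁ c₂ : Fin k ≃ ι₁ ⊕ ι₂) (xs : ι₁ → S) :
    GG ν k h z c₁ xs = GG ν k h z c₂ xs := by
  unfold GG
  congr 1
  ext y
  rw [Set.mem_setOf_eq, Set.mem_setOf_eq, hperm hsymm c₁ c₂]

lemma GG_measurable (hmeas_h : Measurable h) {ι₁ ι₂ : Type*} [Fintype ι₂]
    (c : Fin k ≃ ι₁ ⊕ ι₂) :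
    Measurable (GG ν k h z c) := by
  have hM : MeasurableSet {p : (ι₁ → S) × (ι₂ → S) | z < h (fun j => Sum.elim p.1 p.2 (c j))} := by
    refine measurableSet_lt measurable_const (hmeas_h.comp (measurable_pi_lambda _ fun j => ?_))
    rcases hu : c j with i | i
    · exact (measurable_pi_apply i).comp measurable_fst
    · exact (measurable_pi_apply i).comp measurable_snd
  exact measurable_measure_prodMk_left hM

lemma measurableSet_helim (hmeas_h : Measurable h) {ι ι' : Type*} (xs : ι → S)
    (u : Fin k → ι ⊕ ι') :
    MeasurableSet {y : ι' → S | z < h (fun j => Sum.elim xs y (u j))} :=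
  measurableSet_lt measurable_const (measurable_helim hmeas_h xs u)

lemma measurableSet_happly (hmeas_h : Measurable h) {ι : Type*} (u : Fin k → ι) :
    MeasurableSet {x : ι → S | z < h (fun j => x (u j))} :=
  measurableSet_lt measurable_const (measurable_happly hmeas_h u)


lemma pair_eq (hmeas_h : Measurable h)
    (hsymm : ∀ (σ : Equiv.Perm (Fin k)) (x : Fin k → S), h (x ∘ σ) = h x)
    {ι₁ ι₂ : Type*} [Fintype ι₁] [Fintype ι₂] (cA cB : Fin k ≃ ι₁ ⊕ ι₂) :
    (Measure.pi fun _ : ι₁ ⊕ (ι₂ ⊕ ι₂) => ν)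
      {x | z < h (fun j => x (Sum.map id Sum.inl (cA j)))
           ∧ z < h (fun j => x (Sum.map id Sum.inr (cB j)))}
      = ∫⁻ xs, (GG ν k h z cA xs) ^ 2 ∂(Measure.pi fun _ : ι₁ => ν) := by
  rw [measure_sum_split ν _ (by
    rw [Set.setOf_and]
    exact (measurableSet_happly hmeas_h _).inter (measurableSet_happly hmeas_h _))]
  refine lintegral_congr fun xs => ?_
  have hsetA : ∀ (y : (ι₂ ⊕ ι₂) → S),
      (fun j => Sum.elim xs y (Sum.map id Sum.inl (cA j)))
        = fun j => Sum.elim xs (fun i => y (Sum.inl i)) (cA j) := by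
    intro y; ext j; rcases hc : cA j with i | i <;> simp [hc]
  have hsetB : ∀ (y : (ι₂ ⊕ ι₂) → S),
      (fun j => Sum.elim xs y (Sum.map id Sum.inr (cB j)))
        = fun j => Sum.elim xs (fun i => y (Sum.inr i)) (cB j) := by
    intro y; ext j; rcases hc : cB j with i | i <;> simp [hc]
  have e1 : {y : (ι₂ ⊕ ι₂) → S | Sum.elim xs y ∈
      {x | z < h (fun j => x (Sum.map id Sum.inl (cA j)))
           ∧ z < h (fun j => x (Sum.map id Sum.inr (cB j)))}}
      = {y | z < h (fun j => Sum.elim xs (fun i => y (Sum.inl i)) (cA j))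
           ∧ z < h (fun j => Sum.elim xs (fun i => y (Sum.inr i)) (cB j))} := by
    ext y
    simp only [Set.mem_setOf_eq, hsetA y, hsetB y]
  rw [e1]
  have hmAB : MeasurableSet {y : (ι₂ ⊕ ι₂) → S |
      z < h (fun j => Sum.elim xs (fun i => y (Sum.inl i)) (cA j))
      ∧ z < h (fun j => Sum.elim xs (fun i => y (Sum.inr i)) (cB j))} := by
    rw [Set.setOf_and]
    refine MeasurableSet.inter ?_ ?_ <;>
    · refine measurableSet_lt measurable_const (hmeas_h.comp (measurable_pi_lambda _ fun j => ?_))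
      first
        | (rcases hc : cA j with i | i <;> simp only [Sum.elim_inl, Sum.elim_inr]
           · exact measurable_const
           · exact measurable_pi_apply _)
        | (rcases hc : cB j with i | i <;> simp only [Sum.elim_inl, Sum.elim_inr]
           · exact measurable_const
           · exact measurable_pi_apply _)
  rw [measure_sum_split ν _ hmAB]
  have e2 : ∀ (ya : ι₂ → S),
      (Measure.pi fun _ : ι₂ => ν) {yb | Sum.elim ya yb ∈
        {y : (ι₂ ⊕ ι₂) → S | z < h (fun j => Sum.elim xs (fun i => y (Sum.inl i)) (cA j))
          ∧ z < h (fun j => Sum.elim xs (fun i => y (Sum.inr i)) (cB j))}}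
      = Set.indicator {ya' : ι₂ → S | z < h (fun j => Sum.elim xs ya' (cA j))}
          (fun _ => GG ν k h z cB xs) ya := by
    intro ya
    rw [Set.indicator_apply]
    split_ifs with hya
    · have : {yb : ι₂ → S | Sum.elim ya yb ∈
          {y : (ι₂ ⊕ ι₂) → S | z < h (fun j => Sum.elim xs (fun i => y (Sum.inl i)) (cA j))
            ∧ z < h (fun j => Sum.elim xs (fun i => y (Sum.inr i)) (cB j))}}
          = {yb | z < h (fun j => Sum.elim xs yb (cB j))} := by
        ext yb
        simp only [Set.mem_setOf_eq, Sum.elim_inl, Sum.elim_inr]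
        exact and_iff_right hya
      rw [this]; rfl
    · have : {yb : ι₂ → S | Sum.elim ya yb ∈
          {y : (ι₂ ⊕ ι₂) → S | z < h (fun j => Sum.elim xs (fun i => y (Sum.inl i)) (cA j))
            ∧ z < h (fun j => Sum.elim xs (fun i => y (Sum.inr i)) (cB j))}}
          = ∅ := by
        ext yb
        simp only [Set.mem_setOf_eq, Sum.elim_inl, Sum.elim_inr, Set.mem_empty_iff_false,
          iff_false]
        exact fun hc => hya hc.1
      rw [this, measure_empty]
  rw [lintegral_congr e2,
    lintegral_indicator_const (measurableSet_helim hmeas_h xs (fun j => cA j))]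
  rw [show (Measure.pi fun _ : ι₂ => ν) {ya' : ι₂ → S | z < h (fun j => Sum.elim xs ya' (cA j))}
    = GG ν k h z cA xs from rfl]
  rw [GG_congr ν hsymm cB cA, pow_two]


lemma GG_reindexR {ι₁ ι₂ ι₂' : Type*} [Fintype ι₂] [Fintype ι₂']
    (c : Fin k ≃ ι₁ ⊕ ι₂) (e : ι₂ ≃ ι₂') (xs : ι₁ → S) :
    GG ν k h z c xs = GG ν k h z (c.trans (Equiv.sumCongr (Equiv.refl ι₁) e)) xs := by
  unfold GG
  rw [← (measurePreserving_piCongrLeft (fun _ : ι₂' => ν) e).measure_preimage_equiv]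
  congr 1
  ext y
  simp only [Set.mem_preimage, Set.mem_setOf_eq]
  have harg : (fun j => Sum.elim xs ((MeasurableEquiv.piCongrLeft (fun _ : ι₂' => S) e) y)
      ((c.trans (Equiv.sumCongr (Equiv.refl ι₁) e)) j)) = fun j => Sum.elim xs y (c j) := by
    ext j
    rcases hc : c j with i | i
    · simp [hc]
    · simp only [Equiv.trans_apply, hc, Equiv.sumCongr_apply, Equiv.refl_apply, Sum.map_inr,
        Sum.elim_inr]
      rw [MeasurableEquiv.piCongrLeft]
      simp only [MeasurableEquiv.coe_mk]
      exact Equiv.piCongrLeft_apply_apply (fun _ : ι₂' => S) e y i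
  rw [harg]

lemma GG_reindexL {ι₁ ι₁' ι₂ : Type*} [Fintype ι₂]
    (c : Fin k ≃ ι₁ ⊕ ι₂) (d : ι₁' ≃ ι₁) (w : ι₁' → S) :
    GG ν k h z c (fun m => w (d.symm m))
      = GG ν k h z (c.trans (Equiv.sumCongr d.symm (Equiv.refl ι₂))) w := by
  unfold GG
  congr 1
  ext v
  simp only [Set.mem_setOf_eq]
  have harg : (fun j => Sum.elim (fun m => w (d.symm m)) v (c j))
      = fun j => Sum.elim w v ((c.trans (Equiv.sumCongr d.symm (Equiv.refl ι₂))) j) := by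
    ext j
    rcases hc : c j with i | i <;> simp [hc]
  rw [harg]

lemma GG_split (hmeas_h : Measurable h)
    (hsymm : ∀ (σ : Equiv.Perm (Fin k)) (x : Fin k → S), h (x ∘ σ) = h x)
    {ι₁ ι₃ ι₄ : Type*} [Fintype ι₃] [Fintype ι₄]
    (c : Fin k ≃ ι₁ ⊕ (ι₃ ⊕ ι₄)) (c' : Fin k ≃ (ι₁ ⊕ ι₃) ⊕ ι₄) (xs : ι₁ → S) :
    GG ν k h z c xs
      = ∫⁻ u, GG ν k h z c' (Sum.elim xs u) ∂(Measure.pi fun _ : ι₃ => ν) := by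
  unfold GG
  rw [measure_sum_split ν _ (measurableSet_helim hmeas_h xs (fun j => c j))]
  refine lintegral_congr fun u => ?_
  congr 1
  ext v
  simp only [Set.mem_setOf_eq]
  have hkey : h (fun j => Sum.elim xs (Sum.elim u v) (c j))
      = h (fun j => Sum.elim (Sum.elim xs u) v (c' j)) := by
    rw [hperm hsymm c (c'.trans (Equiv.sumAssoc ι₁ ι₃ ι₄)) (Sum.elim xs (Sum.elim u v))]
    congr 1
    ext j
    rcases hc : c' j with (i | i) | i <;> simp [hc, Equiv.sumAssoc]
  rw [hkey]


lemma core_le (hmeas_h : Measurable h)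
    (hsymm : ∀ (σ : Equiv.Perm (Fin k)) (x : Fin k → S), h (x ∘ σ) = h x)
    {ι₁ ι₂ ι₁' ι₂' : Type} [Fintype ι₁] [Fintype ι₂] [Fintype ι₁'] [Fintype ι₂']
    [Nonempty ι₂] [Unique ι₂']
    (cA cB : Fin k ≃ ι₁ ⊕ ι₂) (cA' cB' : Fin k ≃ ι₁' ⊕ ι₂') :
    (Measure.pi fun _ : ι₁ ⊕ (ι₂ ⊕ ι₂) => ν)
      {x | z < h (fun j => x (Sum.map id Sum.inl (cA j)))
           ∧ z < h (fun j => x (Sum.map id Sum.inr (cB j)))}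
      ≤ (Measure.pi fun _ : ι₁' ⊕ (ι₂' ⊕ ι₂') => ν)
      {x | z < h (fun j => x (Sum.map id Sum.inl (cA' j)))
           ∧ z < h (fun j => x (Sum.map id Sum.inr (cB' j)))} := by
  rw [pair_eq ν hmeas_h hsymm cA cB, pair_eq ν hmeas_h hsymm cA' cB']
  have hcard1 : k = Fintype.card ι₁ + Fintype.card ι₂ := by
    simpa [Fintype.card_sum] using Fintype.card_congr cA
  have hcard2 : k = Fintype.card ι₁' + 1 := by
    simpa [Fintype.card_sum, Fintype.card_unique] using Fintype.card_congr cA'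
  have hpos : 1 ≤ Fintype.card ι₂ := Fintype.card_pos
  set ι₃ := Fin (Fintype.card ι₂ - 1) with hι₃
  have e : ι₂ ≃ (ι₃ ⊕ ι₂') := Fintype.equivOfCardEq (by
    simp only [Fintype.card_sum, Fintype.card_unique, hι₃, Fintype.card_fin]
    omega)
  have d : ι₁' ≃ ι₁ ⊕ ι₃ := Fintype.equivOfCardEq (by
    simp only [Fintype.card_sum, hι₃, Fintype.card_fin]
    omega)
  set c₂ : Fin k ≃ ι₁ ⊕ (ι₃ ⊕ ι₂') := cA.trans (Equiv.sumCongr (Equiv.refl ι₁) e) with hc₂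
  set cc : Fin k ≃ (ι₁ ⊕ ι₃) ⊕ ι₂' := c₂.trans (Equiv.sumAssoc ι₁ ι₃ ι₂').symm with hcc
  have hGGm : Measurable (GG ν k h z cc) := GG_measurable ν hmeas_h cc
  calc ∫⁻ xs, (GG ν k h z cA xs) ^ 2 ∂(Measure.pi fun _ : ι₁ => ν)
      = ∫⁻ xs, (∫⁻ u, GG ν k h z cc (Sum.elim xs u) ∂(Measure.pi fun _ : ι₃ => ν)) ^ 2
          ∂(Measure.pi fun _ : ι₁ => ν) := by
        refine lintegral_congr fun xs => ?_
        rw [GG_reindexR ν cA e xs, ← hc₂, GG_split ν hmeas_h hsymm c₂ cc xs]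
    _ ≤ ∫⁻ xs, ∫⁻ u, (GG ν k h z cc (Sum.elim xs u)) ^ 2 ∂(Measure.pi fun _ : ι₃ => ν)
          ∂(Measure.pi fun _ : ι₁ => ν) := by
        refine lintegral_mono fun xs => ?_
        exact lintegral_sq_le' _ _ (hGGm.comp (measurable_sum_elim_left xs))
    _ = ∫⁻ v, (GG ν k h z cc v) ^ 2 ∂(Measure.pi fun _ : ι₁ ⊕ ι₃ => ν) :=
        (lintegral_sum_split ν _ (hGGm.pow_const 2)).symm
    _ = ∫⁻ w, (GG ν k h z cc (fun m => w (d.symm m))) ^ 2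
          ∂(Measure.pi fun _ : ι₁' => ν) :=
        lintegral_reindex ν d _ (hGGm.pow_const 2)
    _ = ∫⁻ w, (GG ν k h z cA' w) ^ 2 ∂(Measure.pi fun _ : ι₁' => ν) := by
        refine lintegral_congr fun w => ?_
        rw [GG_reindexL ν cc d w,
          GG_congr ν hsymm (cc.trans (Equiv.sumCongr d.symm (Equiv.refl ι₂'))) cA']

end Core

section Bridge

variable {Ω : Type*} [MeasureSpace Ω] {S : Type*} [MeasurableSpace S]
variable [IsProbabilityMeasure (ℙ : Measure Ω)]
variable {ξ : ℕ → Ω → S}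

lemma map_iid (hmeas : ∀ i, Measurable (ξ i))
    (hindep : iIndepFun ξ ℙ)
    (hident : ∀ i j, Measure.map (ξ i) ℙ = Measure.map (ξ j) ℙ)
    {ι : Type} [Fintype ι] (e : ι → ℕ) (he : Function.Injective e) :
    Measure.map (fun ω (i : ι) => ξ (e i) ω) ℙ
      = Measure.pi (fun _ : ι => Measure.map (ξ 0) ℙ) := by
  classical
  refine (Measure.pi_eq fun s hs => ?_).symm
  have hΦ : Measurable (fun ω (i : ι) => ξ (e i) ω) := measurable_pi_lambda _ fun i => hmeas _
  rw [Measure.map_apply hΦ (MeasurableSet.univ_pi hs)]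
  set t : ℕ → Set S := fun n => if hn : ∃ j, e j = n then s hn.choose else Set.univ with ht
  have hts : ∀ j : ι, t (e j) = s j := by
    intro j
    have hex : ∃ j', e j' = e j := ⟨j, rfl⟩
    have hcs : hex.choose = j := he hex.choose_spec
    simp only [ht, hex, dif_pos, hcs]
  have htm : ∀ n, MeasurableSet (t n) := by
    intro n
    by_cases hn : ∃ j, e j = n
    · simp only [ht, hn, dif_pos]
      exact hs _
    · simp only [ht, hn, dif_neg, not_false_iff]
      exact MeasurableSet.univ
  have hpre : (fun ω (i : ι) => ξ (e i) ω) ⁻¹' (Set.univ.pi s)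
      = ⋂ n ∈ (Finset.univ.image e), ξ n ⁻¹' t n := by
    ext ω
    simp only [Set.mem_preimage, Set.mem_univ_pi, Set.mem_iInter, Finset.mem_image,
      Finset.mem_univ, true_and]
    constructor
    · rintro H n ⟨j, rfl⟩
      rw [hts j]
      exact H j
    · intro H j
      have := H (e j) ⟨j, rfl⟩
      rwa [hts j] at this
  rw [hpre, hindep.meas_biInter (fun n _ => ⟨t n, htm n, rfl⟩)]
  rw [Finset.prod_image (fun a _ b _ hab => he hab)]
  refine Finset.prod_congr rfl fun j _ => ?_
  rw [hts j, ← Measure.map_apply (hmeas _) (hs j), hident (e j) 0]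

lemma pairP_repr {k : ℕ} {h : (Fin k → S) → ℝ} {z : ℝ}
    (hmeas : ∀ i, Measurable (ξ i))
    (hindep : iIndepFun ξ ℙ)
    (hident : ∀ i j, Measure.map (ξ i) ℙ = Measure.map (ξ j) ℙ)
    (hmeas_h : Measurable h) (r : ℕ) (hr : r ≤ k) :
    ∃ cA cB : Fin k ≃ (Fin r ⊕ Fin (k - r)),
    ℙ {ω | z < h (fun j => ξ j ω) ∧ z < h (fun j => ξ (k - r + j) ω)}
      = (Measure.pi fun _ : Fin r ⊕ (Fin (k-r) ⊕ Fin (k-r)) => Measure.map (ξ 0) ℙ)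
        {x | z < h (fun j => x (Sum.map id Sum.inl (cA j)))
             ∧ z < h (fun j => x (Sum.map id Sum.inr (cB j)))} := by
  set b := k - r with hb
  have hbr : b + r = k := by omega
  classical
  have hΦ : Measurable (fun ω (i : Fin r ⊕ (Fin b ⊕ Fin b)) => ξ
      (Sum.elim (fun i : Fin r => b + (i:ℕ))
        (Sum.elim (fun i : Fin b => (i:ℕ)) (fun i : Fin b => k + (i:ℕ))) i) ω) :=
    measurable_pi_lambda _ fun i => hmeas _
  set e : (Fin r ⊕ (Fin b ⊕ Fin b)) → ℕ :=
    Sum.elim (fun i => b + (i:ℕ)) (Sum.elim (fun i => (i:ℕ)) (fun i => k + (i:ℕ))) with hedef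
  have he : Function.Injective e := by
    rintro (a | a | a) (c | c | c) hac <;>
      simp only [hedef, Sum.elim_inl, Sum.elim_inr] at hac <;>
      first
        | (exact congrArg _ (Fin.ext (by omega)))
        | (exact congrArg _ (congrArg _ (Fin.ext (by omega))))
        | (exact absurd hac (by have := a.2; have := c.2; omega))
  let cA : Fin k ≃ (Fin r ⊕ Fin b) :=
    ⟨fun j => if hj : (j : ℕ) < b then Sum.inr ⟨j, hj⟩
        else Sum.inl ⟨(j:ℕ) - b, by have := j.2; omega⟩,
      Sum.elim (fun i => ⟨b + (i:ℕ), by have := i.2; omega⟩)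
        (fun i => ⟨i, by have := i.2; omega⟩),
      fun j => by
        dsimp only
        split_ifs with hj
        · exact Fin.ext rfl
        · exact Fin.ext (by simp; omega),
      fun w => by
        rcases w with i | i
        · have hi := i.2
          dsimp only [Sum.elim_inl]
          rw [dif_neg (by omega)]
          congr 1
          exact Fin.ext (by simp)
        · have hi := i.2
          dsimp only [Sum.elim_inr]
          rw [dif_pos (by omega)]⟩
  let cB : Fin k ≃ (Fin r ⊕ Fin b) :=
    ⟨fun j => if hj : (j : ℕ) < r then Sum.inl ⟨j, hj⟩
        else Sum.inr ⟨(j:ℕ) - r, by have := j.2; omega⟩,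
      Sum.elim (fun i => ⟨i, by have := i.2; omega⟩)
        (fun i => ⟨r + (i:ℕ), by have := i.2; omega⟩),
      fun j => by
        dsimp only
        split_ifs with hj
        · exact Fin.ext rfl
        · exact Fin.ext (by simp; omega),
      fun w => by
        rcases w with i | i
        · have hi := i.2
          dsimp only [Sum.elim_inl]
          rw [dif_pos (by omega)]
        · have hi := i.2
          dsimp only [Sum.elim_inr]
          rw [dif_neg (by omega)]
          congr 1
          exact Fin.ext (by simp)⟩
  refine ⟨cA, cB, ?_⟩
  have heA : ∀ j : Fin k, e (Sum.map id Sum.inl (cA j)) = (j : ℕ) := by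
    intro j
    simp only [cA, Equiv.coe_fn_mk]
    split_ifs with hj
    · simp [hedef]
    · simp only [Sum.map_inl, id_eq, hedef, Sum.elim_inl]
      have := j.2
      omega
  have heB : ∀ j : Fin k, e (Sum.map id Sum.inr (cB j)) = k - r + (j : ℕ) := by
    intro j
    simp only [cB, Equiv.coe_fn_mk]
    split_ifs with hj
    · simp only [Sum.map_inl, id_eq, hedef, Sum.elim_inl]
      omega
    · simp only [Sum.map_inr, hedef, Sum.elim_inr, Sum.elim_inr]
      have := j.2
      omega
  have hCm : MeasurableSet {x : (Fin r ⊕ (Fin b ⊕ Fin b)) → S |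
      z < h (fun j => x (Sum.map id Sum.inl (cA j)))
      ∧ z < h (fun j => x (Sum.map id Sum.inr (cB j)))} := by
    rw [Set.setOf_and]
    exact (measurableSet_lt measurable_const
        (hmeas_h.comp (measurable_pi_lambda _ fun j => measurable_pi_apply _))).inter
      (measurableSet_lt measurable_const
        (hmeas_h.comp (measurable_pi_lambda _ fun j => measurable_pi_apply _)))
  have hpre : {ω | z < h (fun j => ξ j ω) ∧ z < h (fun j => ξ (k - r + j) ω)}
      = (fun ω (i : Fin r ⊕ (Fin b ⊕ Fin b)) => ξ (e i) ω) ⁻¹'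
        {x | z < h (fun j => x (Sum.map id Sum.inl (cA j)))
             ∧ z < h (fun j => x (Sum.map id Sum.inr (cB j)))} := by
    ext ω
    have h1 : (fun j : Fin k => ξ (e (Sum.map id Sum.inl (cA j))) ω)
        = fun j : Fin k => ξ j ω := funext fun j => by rw [heA j]
    have h2 : (fun j : Fin k => ξ (e (Sum.map id Sum.inr (cB j))) ω)
        = fun j : Fin k => ξ (k - r + j) ω := funext fun j => by rw [heB j]
    simp only [Set.mem_preimage, Set.mem_setOf_eq, h1, h2]
  rw [hpre, ← Measure.map_apply (by exact hΦ) hCm,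
    map_iid hmeas hindep hident e he]


lemma pairP_le {k : ℕ} {h : (Fin k → S) → ℝ} {z : ℝ} (hk : 0 < k)
    (hmeas : ∀ i, Measurable (ξ i))
    (hindep : iIndepFun ξ ℙ)
    (hident : ∀ i j, Measure.map (ξ i) ℙ = Measure.map (ξ j) ℙ)
    (hmeas_h : Measurable h)
    (hsymm : ∀ (σ : Equiv.Perm (Fin k)) (x : Fin k → S), h (x ∘ σ) = h x)
    (r : ℕ) (hr1 : 1 ≤ r) (hr2 : r ≤ k - 1) :
    ℙ {ω | z < h (fun j => ξ j ω) ∧ z < h (fun j => ξ (k - r + j) ω)}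
      ≤ ℙ {ω | z < h (fun j => ξ j ω) ∧ z < h (fun j => ξ (k - (k-1) + j) ω)} := by
  haveI : IsProbabilityMeasure (Measure.map (ξ 0) ℙ) :=
    Measure.isProbabilityMeasure_map (hmeas 0).aemeasurable
  obtain ⟨cA, cB, hrep⟩ := pairP_repr (z := z) hmeas hindep hident hmeas_h r (by omega)
  obtain ⟨cA', cB', hrep'⟩ := pairP_repr (z := z) hmeas hindep hident hmeas_h (k-1) (by omega)
  rw [hrep, hrep']
  haveI : Nonempty (Fin (k - r)) := ⟨⟨0, by omega⟩⟩
  haveI : Unique (Fin (k - (k-1))) :=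
    ⟨⟨⟨0, by omega⟩⟩, fun a => Fin.ext (by have := a.2; omega)⟩
  exact core_le _ hmeas_h hsymm cA cB cA' cB'

end Bridge

section NatLemmas

lemma nat_choose_sub_le (k n j : ℕ) (hk : 0 < k) :
    n.choose k ≤ (n - j).choose k + j * n ^ (k - 1) := by
  induction j with
  | zero => simp
  | succ j ih =>
    have hstep : (n - j).choose k ≤ (n - (j+1)).choose k + n ^ (k - 1) := by
      rcases Nat.eq_zero_or_pos (n - j) with h0 | hpos
      · rw [h0]
        have h1 : n - (j+1) = 0 := by omega
        rw [h1]
        exact Nat.le_add_right _ _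
      · obtain ⟨m, hm⟩ : ∃ m, n - j = m + 1 := ⟨n - j - 1, by omega⟩
        have h2 : n - (j+1) = m := by omega
        rw [hm, h2]
        obtain ⟨k', rfl⟩ : ∃ k', k = k' + 1 := ⟨k - 1, by omega⟩
        rw [Nat.choose_succ_succ']
        have hle : m.choose k' ≤ n ^ (k' + 1 - 1) := by
          simpa using (Nat.choose_le_pow m k').trans (Nat.pow_le_pow_left (by omega) k')
        omega
    calc n.choose k ≤ (n - j).choose k + j * n ^ (k-1) := ih
      _ ≤ ((n - (j+1)).choose k + n ^ (k-1)) + j * n ^ (k-1) := by omega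
      _ = (n - (j+1)).choose k + (j+1) * n ^ (k-1) := by ring

lemma nat_pow_le_choose_mul (k n : ℕ) (hn : 2 * k ≤ n) :
    n ^ k ≤ 2 ^ k * (k.factorial * n.choose k) := by
  calc n ^ k ≤ (2 * (n + 1 - k)) ^ k := Nat.pow_le_pow_left (by omega) k
    _ = 2 ^ k * (n + 1 - k) ^ k := by rw [Nat.mul_pow]
    _ ≤ 2 ^ k * n.descFactorial k := by
        exact Nat.mul_le_mul_left _ (Nat.pow_sub_le_descFactorial n k)
    _ = 2 ^ k * (k.factorial * n.choose k) := by
        rw [Nat.descFactorial_eq_factorial_mul_choose]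

end NatLemmas



variable {Ω : Type*} [MeasureSpace Ω] {S : Type*} [MeasurableSpace S]

/-- `p_{n,z} = P(h(ξ₁, …, ξ_k) > z)`. -/
noncomputable def pnz (k : ℕ) (ξ : ℕ → Ω → S) (h : (Fin k → S) → ℝ) (z : ℝ) : ℝ :=
  (ℙ {ω | z < h (fun j => ξ j ω)}).toReal

/-- `τ_{n,z}(r) = p_{n,z}⁻¹ · P(h(ξ₁, …, ξ_k) > z, h(ξ_{1+k-r}, …, ξ_{2k-r}) > z)`,
where the two index tuples share exactly `r` coordinates (0-based indexing). -/
noncomputable def taunz (k : ℕ) (ξ : ℕ → Ω → S) (h : (Fin k → S) → ℝ) (z : ℝ) (r : ℕ) : ℝ :=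
  (pnz k ξ h z)⁻¹ *
    (ℙ {ω | z < h (fun j => ξ j ω) ∧ z < h (fun j => ξ (k - r + j) ω)}).toReal

/-- `λ_{n,z} = C(n,k) · p_{n,z}`. -/
noncomputable def lamnz (k : ℕ) (ξ : ℕ → Ω → S) (h : (Fin k → S) → ℝ) (n : ℕ) (z : ℝ) : ℝ :=
  (n.choose k : ℝ) * pnz k ξ h z

/-- The `U`-max-statistic `H_n`: the maximum of the kernel `h` over all
  increasing `k`-tuples of indices from `{0, …, n-1}`. -/
noncomputable def Hmax (k : ℕ) (ξ : ℕ → Ω → S) (h : (Fin k → S) → ℝ) (n : ℕ) (ω : Ω) : ℝ :=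
  ⨆ i : {i : Fin k → Fin n // StrictMono i}, h (fun j => ξ (i.1 j) ω)

theorem stmt_18 [IsProbabilityMeasure (ℙ : Measure Ω)]
    (k : ℕ) (hk : 0 < k) (ξ : ℕ → Ω → S)
    (hmeas : ∀ i, Measurable (ξ i))
    (hindep : iIndepFun ξ ℙ)
    (hident : ∀ i j, Measure.map (ξ i) ℙ = Measure.map (ξ j) ℙ)
    (h : (Fin k → S) → ℝ) (hmeas_h : Measurable h)
    (hsymm : ∀ (σ : Equiv.Perm (Fin k)) (x : Fin k → S), h (x ∘ σ) = h x)
    -- the Poisson approximation bound of Theorem 1: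
    (hbound : ∀ n, k ≤ n → ∀ z : ℝ,
      |(ℙ {ω | Hmax k ξ h n ω ≤ z}).toReal - Real.exp (-(lamnz k ξ h n z))| ≤
        (1 - Real.exp (-(lamnz k ξ h n z))) *
          (pnz k ξ h z * ((n.choose k : ℝ) - ((n - k).choose k : ℝ)) +
            ∑ r ∈ Finset.Ico 1 k,
              (k.choose r : ℝ) * ((n - k).choose (k - r) : ℝ) * taunz k ξ h z r))
    (T : Set ℝ) (zseq : ℕ → ℝ → ℝ) (Λ : ℝ → ℝ)
    (hΛpos : ∀ t ∈ T, 0 < Λ t)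
    -- condition (2): λ_{n, z_n(t)} → λ_t > 0
    (hlam : ∀ t ∈ T, Tendsto (fun n => lamnz k ξ h n (zseq n t)) atTop (nhds (Λ t)))
    -- condition (3): n^{2k-1} p_{n,z_n(t)} τ_{n,z_n(t)}(k-1) → 0
    (hcorr : ∀ t ∈ T, Tendsto
      (fun n : ℕ => (n : ℝ) ^ (2 * k - 1) * pnz k ξ h (zseq n t) * taunz k ξ h (zseq n t) (k - 1))
      atTop (nhds 0)) :
    ∀ t ∈ T, Tendsto (fun n => (ℙ {ω | Hmax k ξ h n ω ≤ zseq n t}).toReal)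
      atTop (nhds (Real.exp (-Λ t))) := by
  intro t ht
  have hΛt : 0 < Λ t := hΛpos t ht
  have hlam' := hlam t ht
  have hcorr' := hcorr t ht
  set p : ℕ → ℝ := fun n => pnz k ξ h (zseq n t) with hpdef
  set lam : ℕ → ℝ := fun n => lamnz k ξ h n (zseq n t) with hlamdef
  set τ : ℕ → ℕ → ℝ := fun n r => taunz k ξ h (zseq n t) r with hτdef
  have hp0 : ∀ n, 0 ≤ p n := fun n => ENNReal.toReal_nonneg
  have hτ0 : ∀ n r, 0 ≤ τ n r :=
    fun n r => mul_nonneg (inv_nonneg.mpr ENNReal.toReal_nonneg) ENNReal.toReal_nonneg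
  have hlam_eq : ∀ n, lam n = (n.choose k : ℝ) * p n := fun n => rfl
  have htau : ∀ n r, 1 ≤ r → r ≤ k - 1 → τ n r ≤ τ n (k - 1) := by
    intro n r h1 h2
    refine mul_le_mul_of_nonneg_left ?_ (inv_nonneg.mpr ENNReal.toReal_nonneg)
    exact ENNReal.toReal_mono (measure_ne_top _ _)
      (pairP_le hk hmeas hindep hident hmeas_h hsymm r h1 h2)
  set W : ℕ → ℝ := fun n => p n * ((n.choose k : ℝ) - ((n - k).choose k : ℝ)) +
      ∑ r ∈ Finset.Ico 1 k,
        (k.choose r : ℝ) * ((n - k).choose (k - r) : ℝ) * τ n r with hWdef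
  have hexp : Tendsto (fun n => Real.exp (-(lam n))) atTop (nhds (Real.exp (-Λ t))) :=
    (Real.continuous_exp.tendsto _).comp hlam'.neg
  -- W is nonnegative
  have hW0 : ∀ n, 0 ≤ W n := by
    intro n
    refine add_nonneg (mul_nonneg (hp0 n) (sub_nonneg.mpr ?_)) (Finset.sum_nonneg fun r _ => ?_)
    · exact_mod_cast Nat.choose_le_choose k (Nat.sub_le n k)
    · exact mul_nonneg (mul_nonneg (Nat.cast_nonneg _) (Nat.cast_nonneg _)) (hτ0 n r)
  -- eventual upper bound for W
  have hWle : ∀ᶠ n in atTop, W n ≤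
      ((k : ℝ) * (2 ^ k * (k.factorial : ℝ))) * (lam n / n) +
        (2 ^ k * (2 / Λ t)) * ((n : ℝ) ^ (2 * k - 1) * p n * τ n (k - 1)) := by
    filter_upwards [eventually_ge_atTop (2 * k),
      hlam'.eventually_const_le (show Λ t / 2 < Λ t by linarith)] with n hn2k hlb
    have hn1 : 1 ≤ n := by omega
    have hn0 : (0:ℝ) < n := by exact_mod_cast Nat.pos_of_ne_zero (by omega)
    have hnk : ((n:ℝ)) ^ k = (n:ℝ) ^ (k - 1) * n := by
      rw [← pow_succ]
      congr 1
      omega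
    -- first term
    have hsub : ((n.choose k : ℝ)) - ((n - k).choose k : ℝ) ≤ (k:ℝ) * (n:ℝ) ^ (k - 1) := by
      have hnat := nat_choose_sub_le k n k hk
      have : ((n.choose k : ℕ) : ℝ) ≤ (((n - k).choose k : ℕ) : ℝ) + (k:ℝ) * (n:ℝ) ^ (k-1) := by
        exact_mod_cast hnat
      linarith
    have key : p n * (n:ℝ) ^ k ≤ 2 ^ k * (k.factorial : ℝ) * lam n := by
      have hc : ((n:ℝ)) ^ k ≤ 2 ^ k * ((k.factorial : ℝ) * (n.choose k : ℝ)) := by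
        exact_mod_cast nat_pow_le_choose_mul k n hn2k
      calc p n * (n:ℝ) ^ k ≤ p n * (2 ^ k * ((k.factorial : ℝ) * (n.choose k : ℝ))) :=
            mul_le_mul_of_nonneg_left hc (hp0 n)
        _ = 2 ^ k * (k.factorial : ℝ) * ((n.choose k : ℝ) * p n) := by ring
        _ = 2 ^ k * (k.factorial : ℝ) * lam n := by rw [← hlam_eq n]
    have hT1 : p n * ((n.choose k : ℝ) - ((n - k).choose k : ℝ)) ≤
        ((k : ℝ) * (2 ^ k * (k.factorial : ℝ))) * (lam n / n) := by
      have e1 : p n * ((n.choose k : ℝ) - ((n - k).choose k : ℝ)) ≤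
          p n * ((k:ℝ) * (n:ℝ) ^ (k - 1)) := mul_le_mul_of_nonneg_left hsub (hp0 n)
      refine e1.trans ?_
      rw [mul_div_assoc', le_div_iff₀ hn0]
      calc p n * ((k:ℝ) * (n:ℝ) ^ (k - 1)) * n = (k:ℝ) * (p n * (n:ℝ) ^ k) := by
            rw [hnk]; ring
        _ ≤ (k:ℝ) * (2 ^ k * (k.factorial : ℝ) * lam n) :=
            mul_le_mul_of_nonneg_left key (Nat.cast_nonneg k)
        _ = (k : ℝ) * (2 ^ k * (k.factorial : ℝ)) * lam n := by ring
    -- second term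
    have h2k1 : ((n:ℝ)) ^ (2 * k - 1) = (n:ℝ) ^ (k - 1) * (n:ℝ) ^ k := by
      rw [← pow_add]
      congr 1
      omega
    have hnkp : Λ t / 2 ≤ (n:ℝ) ^ k * p n := by
      refine hlb.trans ?_
      rw [hlam_eq n]
      refine mul_le_mul_of_nonneg_right ?_ (hp0 n)
      exact_mod_cast Nat.choose_le_pow n k
    have hXY : (n:ℝ) ^ (k - 1) * τ n (k - 1) ≤
        (2 / Λ t) * ((n:ℝ) ^ (2 * k - 1) * p n * τ n (k - 1)) := by
      have hX0 : 0 ≤ (n:ℝ) ^ (k - 1) * τ n (k - 1) :=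
        mul_nonneg (by positivity) (hτ0 n (k - 1))
      have step : (n:ℝ) ^ (k - 1) * τ n (k - 1) * (Λ t / 2) ≤
          (n:ℝ) ^ (2 * k - 1) * p n * τ n (k - 1) := by
        rw [h2k1]
        nlinarith [mul_le_mul_of_nonneg_left hnkp hX0]
      have hΛ2 : 0 < Λ t / 2 := by linarith
      have := (le_div_iff₀ hΛ2).mpr step
      refine this.trans (le_of_eq ?_)
      field_simp
    have hT2 : (∑ r ∈ Finset.Ico 1 k,
        (k.choose r : ℝ) * ((n - k).choose (k - r) : ℝ) * τ n r) ≤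
        (2 ^ k * (2 / Λ t)) * ((n : ℝ) ^ (2 * k - 1) * p n * τ n (k - 1)) := by
      have hstep1 : (∑ r ∈ Finset.Ico 1 k,
          (k.choose r : ℝ) * ((n - k).choose (k - r) : ℝ) * τ n r) ≤
          ∑ r ∈ Finset.Ico 1 k, (k.choose r : ℝ) * ((n:ℝ) ^ (k-1) * τ n (k - 1)) := by
        refine Finset.sum_le_sum fun r hr => ?_
        obtain ⟨hr1, hr2⟩ := Finset.mem_Ico.mp hr
        have hC : ((n - k).choose (k - r) : ℝ) ≤ (n:ℝ) ^ (k - 1) := by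
          have hnat : (n - k).choose (k - r) ≤ n ^ (k - 1) := by
            calc (n - k).choose (k - r) ≤ (n - k) ^ (k - r) := Nat.choose_le_pow _ _
              _ ≤ n ^ (k - r) := Nat.pow_le_pow_left (Nat.sub_le n k) _
              _ ≤ n ^ (k - 1) := Nat.pow_le_pow_right hn1 (by omega)
          exact_mod_cast hnat
        rw [mul_assoc]
        refine mul_le_mul_of_nonneg_left ?_ (Nat.cast_nonneg _)
        exact mul_le_mul hC (htau n r hr1 (by omega)) (hτ0 n r) (by positivity)
      refine hstep1.trans ?_
      rw [← Finset.sum_mul]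
      have hsumC : (∑ r ∈ Finset.Ico 1 k, (k.choose r : ℝ)) ≤ 2 ^ k := by
        have hnat : (∑ r ∈ Finset.Ico 1 k, k.choose r) ≤ 2 ^ k := by
          calc (∑ r ∈ Finset.Ico 1 k, k.choose r)
              ≤ ∑ r ∈ Finset.range (k + 1), k.choose r := by
                refine Finset.sum_le_sum_of_subset ?_
                intro x hx
                simp only [Finset.mem_range, Finset.mem_Ico] at *
                omega
            _ = 2 ^ k := Nat.sum_range_choose k
        calc (∑ r ∈ Finset.Ico 1 k, (k.choose r : ℝ))
            = ((∑ r ∈ Finset.Ico 1 k, k.choose r : ℕ) : ℝ) := by push_cast; rfl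
          _ ≤ 2 ^ k := by exact_mod_cast hnat
      calc (∑ r ∈ Finset.Ico 1 k, (k.choose r : ℝ)) * ((n:ℝ) ^ (k-1) * τ n (k - 1))
          ≤ 2 ^ k * ((n:ℝ) ^ (k-1) * τ n (k - 1)) := by
            refine mul_le_mul_of_nonneg_right hsumC ?_
            exact mul_nonneg (by positivity) (hτ0 n (k - 1))
        _ ≤ 2 ^ k * ((2 / Λ t) * ((n : ℝ) ^ (2 * k - 1) * p n * τ n (k - 1))) := by
            refine mul_le_mul_of_nonneg_left hXY (by positivity)
        _ = (2 ^ k * (2 / Λ t)) * ((n : ℝ) ^ (2 * k - 1) * p n * τ n (k - 1)) := by ring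
    exact add_le_add hT1 hT2
  -- the bound tends to 0
  have hD : Tendsto (fun n => ((k : ℝ) * (2 ^ k * (k.factorial : ℝ))) * (lam n / n) +
      (2 ^ k * (2 / Λ t)) * ((n : ℝ) ^ (2 * k - 1) * p n * τ n (k - 1))) atTop (nhds 0) := by
    have h1 : Tendsto (fun n : ℕ => lam n / n) atTop (nhds 0) :=
      hlam'.div_atTop tendsto_natCast_atTop_atTop
    have h2 : Tendsto (fun n : ℕ => (n : ℝ) ^ (2 * k - 1) * p n * τ n (k - 1)) atTop (nhds 0) :=
      hcorr'
    have := (h1.const_mul ((k : ℝ) * (2 ^ k * (k.factorial : ℝ)))).add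
      (h2.const_mul (2 ^ k * (2 / Λ t)))
    simpa using this
  have hW : Tendsto W atTop (nhds 0) :=
    squeeze_zero' (Eventually.of_forall hW0) hWle hD
  have hfac : Tendsto (fun n => (1 - Real.exp (-(lam n))) * W n) atTop (nhds 0) := by
    have := ((tendsto_const_nhds (x := (1:ℝ))).sub hexp).mul hW
    simpa using this
  have hdiff : Tendsto (fun n =>
      (ℙ {ω | Hmax k ξ h n ω ≤ zseq n t}).toReal - Real.exp (-(lam n))) atTop (nhds 0) := by
    refine squeeze_zero_norm' ?_ hfac
    filter_upwards [eventually_ge_atTop k] with n hn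
    rw [Real.norm_eq_abs]
    exact hbound n hn (zseq n t)
  have := hdiff.add hexp
  simpa using this
end

section
/- For the counting quantities of Theorem 1, the correlation ratios are monotone: p_{n,z} ≤ τ_{n,z}(1) ≤ τ_{n,z}(2) ≤ … ≤ τ_{n,z}(k) = 1, where τ_{n,z}(r) = p_{n,z}^{−1} P(h(ξ₁,…,ξ_k) > z and h(ξ_{1+k−r},…,ξ_{2k−r}) > z) and p_{n,z} = P(h(ξ₁,…,ξ_k) > z) > 0. -/
open MeasureTheory ProbabilityTheory
open scoped ENNReal
set_option linter.unusedSectionVars false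
set_option maxHeartbeats 1000000

section helpers

variable {S : Type*} [MeasurableSpace S]

/-- Join two blocks of coordinates. -/
def jn {S : Type*} {m n : ℕ} (x : Fin m → S) (w : Fin n → S) : Fin (m + n) → S :=
  fun i => if h : (i : ℕ) < m then x ⟨i, h⟩ else w ⟨(i : ℕ) - m, by have := i.isLt; omega⟩

lemma measurable_jn {m n : ℕ} :
    Measurable (fun p : (Fin m → S) × (Fin n → S) => jn p.1 p.2) := by
  apply measurable_pi_lambda
  intro i
  by_cases h : (i : ℕ) < m
  · have : (fun p : (Fin m → S) × (Fin n → S) => jn p.1 p.2 i)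
        = fun p => p.1 ⟨i, h⟩ := by funext p; simp [jn, h]
    rw [this]; exact (measurable_pi_apply _).comp measurable_fst
  · have : (fun p : (Fin m → S) × (Fin n → S) => jn p.1 p.2 i)
        = fun p => p.2 ⟨(i : ℕ) - m, by have := i.isLt; omega⟩ := by funext p; simp [jn, h]
    rw [this]; exact (measurable_pi_apply _).comp measurable_snd

lemma measurePreserving_jn {m n : ℕ} (μ : Measure S) [IsProbabilityMeasure μ] :
    MeasurePreserving (fun p : (Fin m → S) × (Fin n → S) => jn p.1 p.2)
      ((Measure.pi fun _ : Fin m => μ).prod (Measure.pi fun _ : Fin n => μ))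
      (Measure.pi fun _ : Fin (m + n) => μ) := by
  have h1 := measurePreserving_sumPiEquivProdPi_symm (fun _ : Fin m ⊕ Fin n => μ)
  have h2 := measurePreserving_piCongrLeft (fun _ : Fin (m + n) => μ) finSumFinEquiv
  have h3 := h2.comp h1
  have he : (fun p : (Fin m → S) × (Fin n → S) => jn p.1 p.2)
      = (⇑(MeasurableEquiv.piCongrLeft (fun _ : Fin (m + n) => S) finSumFinEquiv)
          ∘ ⇑(MeasurableEquiv.sumPiEquivProdPi (fun _ : Fin m ⊕ Fin n => S)).symm) := by
    funext p
    obtain ⟨f, g⟩ := p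
    funext i
    simp only [Function.comp_apply, MeasurableEquiv.coe_piCongrLeft,
      MeasurableEquiv.coe_sumPiEquivProdPi_symm]
    by_cases h : (i : ℕ) < m
    · have hi : i = finSumFinEquiv (Sum.inl (⟨i, h⟩ : Fin m)) := by
        apply Fin.ext; simp
      conv_rhs => rw [hi, Equiv.piCongrLeft_sumInl]
      simp [jn, h]
    · have hi : i = finSumFinEquiv (Sum.inr (⟨(i : ℕ) - m, by have := i.isLt; omega⟩ : Fin n)) := by
        apply Fin.ext; simp; omega
      conv_rhs => rw [hi, Equiv.piCongrLeft_sumInr]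
      simp [jn, h]
  rw [he]; exact h3

lemma split_meas {m n : ℕ} (μ : Measure S) [IsProbabilityMeasure μ]
    {T : Set (Fin (m + n) → S)} (hT : MeasurableSet T) :
    (Measure.pi fun _ : Fin (m + n) => μ) T
      = ∫⁻ w : Fin n → S, (Measure.pi fun _ : Fin m => μ) {x | jn x w ∈ T}
          ∂(Measure.pi fun _ : Fin n => μ) := by
  rw [← (measurePreserving_jn μ).measure_preimage hT.nullMeasurableSet,
    Measure.prod_apply_symm (measurable_jn hT)]
  rfl

lemma split_meas' {m n : ℕ} (μ : Measure S) [IsProbabilityMeasure μ]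
    {T : Set (Fin (m + n) → S)} (hT : MeasurableSet T) :
    (Measure.pi fun _ : Fin (m + n) => μ) T
      = ∫⁻ x : Fin m → S, (Measure.pi fun _ : Fin n => μ) {w | jn x w ∈ T}
          ∂(Measure.pi fun _ : Fin m => μ) := by
  rw [← (measurePreserving_jn μ).measure_preimage hT.nullMeasurableSet,
    Measure.prod_apply (measurable_jn hT)]
  rfl

lemma split_lintegral {m n : ℕ} (μ : Measure S) [IsProbabilityMeasure μ]
    {f : (Fin (m + n) → S) → ℝ≥0∞} (hf : Measurable f) :
    ∫⁻ v, f v ∂(Measure.pi fun _ : Fin (m + n) => μ)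
      = ∫⁻ x : Fin m → S, ∫⁻ w : Fin n → S, f (jn x w)
          ∂(Measure.pi fun _ : Fin n => μ) ∂(Measure.pi fun _ : Fin m => μ) := by
  rw [← (measurePreserving_jn μ).lintegral_comp hf, lintegral_prod]
  exact (hf.comp measurable_jn).aemeasurable

/-- Cauchy–Schwarz for `lintegral` over a probability measure. -/
lemma sq_lintegral_le {α : Type*} [MeasurableSpace α] (μ : Measure α) [IsProbabilityMeasure μ]
    {f : α → ℝ≥0∞} (hf : Measurable f) :
    (∫⁻ a, f a ∂μ) * (∫⁻ a, f a ∂μ) ≤ ∫⁻ a, f a * f a ∂μ := by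
  have hconj : Real.HolderConjugate 2 2 := Real.HolderConjugate.two_two
  have h := ENNReal.lintegral_mul_le_Lp_mul_Lq μ hconj hf.aemeasurable
    (aemeasurable_const (b := (1 : ℝ≥0∞)))
  simp only [Pi.mul_apply, mul_one, ENNReal.one_rpow, lintegral_const, measure_univ,
    one_mul] at h
  have h2 : ∀ x : ℝ≥0∞, x ^ (2 : ℝ) = x * x := fun x => by
    rw [show (2 : ℝ) = ((2 : ℕ) : ℝ) by norm_num, ENNReal.rpow_natCast, sq]
  simp only [h2] at h
  calc (∫⁻ a, f a ∂μ) * (∫⁻ a, f a ∂μ)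
      ≤ ((∫⁻ a, f a * f a ∂μ) ^ (1 / 2 : ℝ)) * ((∫⁻ a, f a * f a ∂μ) ^ (1 / 2 : ℝ)) :=
        mul_le_mul' h h
    _ = ∫⁻ a, f a * f a ∂μ := by
        rw [← ENNReal.rpow_add_of_nonneg _ _ (by norm_num) (by norm_num)]
        norm_num

/-- The function plugging `x` into the first `a` coordinates and `y` into the last `b`. -/
def Jf {S : Type*} (k a b : ℕ) (hab : a + b = k) (x : Fin a → S) (y : Fin b → S) : Fin k → S :=
  fun j => if hj : (j : ℕ) < a then x ⟨j, hj⟩ else y ⟨(j : ℕ) - a, by have := j.isLt; omega⟩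

lemma measurable_Jf {k a b : ℕ} (hab : a + b = k) :
    Measurable (fun p : (Fin b → S) × (Fin a → S) => Jf k a b hab p.2 p.1) := by
  apply measurable_pi_lambda
  intro j
  by_cases hj : (j : ℕ) < a
  · have : (fun p : (Fin b → S) × (Fin a → S) => Jf k a b hab p.2 p.1 j)
        = fun p => p.2 ⟨j, hj⟩ := by funext p; simp [Jf, hj]
    rw [this]; exact (measurable_pi_apply _).comp measurable_snd
  · have : (fun p : (Fin b → S) × (Fin a → S) => Jf k a b hab p.2 p.1 j)
        = fun p => p.1 ⟨(j : ℕ) - a, by have := j.isLt; omega⟩ := by funext p; simp [Jf, hj]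
    rw [this]; exact (measurable_pi_apply _).comp measurable_fst

lemma measurableSet_Jf {k a b : ℕ} (hab : a + b = k) {h : (Fin k → S) → ℝ}
    (hmeas_h : Measurable h) (z : ℝ) (y : Fin b → S) :
    MeasurableSet {x : Fin a → S | z < h (Jf k a b hab x y)} := by
  have hm : Measurable (fun x : Fin a → S => Jf k a b hab x y) :=
    (measurable_Jf hab).comp (measurable_prodMk_left (x := y))
  exact (hmeas_h.comp hm) measurableSet_Ioi

/-- `G(y) = μ^{⊗a} {x | z < h(x, y)}`. -/
noncomputable def Gf (μ : Measure S) (k a b : ℕ) (hab : a + b = k)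
    (h : (Fin k → S) → ℝ) (z : ℝ) (y : Fin b → S) : ℝ≥0∞ :=
  (Measure.pi fun _ : Fin a => μ) {x | z < h (Jf k a b hab x y)}

lemma measurable_Gf {μ : Measure S} [IsProbabilityMeasure μ] {k a b : ℕ} (hab : a + b = k)
    {h : (Fin k → S) → ℝ} (hmeas_h : Measurable h) (z : ℝ) :
    Measurable (Gf μ k a b hab h z) := by
  have hs : MeasurableSet ((fun p : (Fin b → S) × (Fin a → S) => Jf k a b hab p.2 p.1) ⁻¹'
      (h ⁻¹' Set.Ioi z)) := (measurable_Jf hab) (hmeas_h measurableSet_Ioi)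
  exact measurable_measure_prodMk_left hs

noncomputable def If (μ : Measure S) (k a b : ℕ) (hab : a + b = k)
    (h : (Fin k → S) → ℝ) (z : ℝ) : ℝ≥0∞ :=
  ∫⁻ y, Gf μ k a b hab h z y * Gf μ k a b hab h z y ∂(Measure.pi fun _ : Fin b => μ)

lemma Jf_succ {k a b : ℕ} (hab : a + 1 + b = k) (hab' : a + (1 + b) = k)
    (x : Fin a → S) (t : Fin 1 → S) (y : Fin b → S) :
    Jf k (a + 1) b hab (jn x t) y = Jf k a (1 + b) hab' x (jn t y) := by
  funext j
  simp only [Jf, jn]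
  by_cases h1 : (j : ℕ) < a
  · simp [h1, Nat.lt_succ_of_lt h1]
  · by_cases h2 : (j : ℕ) < a + 1
    · simp [h1, h2, show (j : ℕ) - a < 1 by omega]
    · simp [h1, h2, show ¬ ((j : ℕ) - a < 1) by omega]
      exact congrArg y (Fin.ext (Nat.sub_sub _ _ _).symm)

lemma Gf_succ (μ : Measure S) [IsProbabilityMeasure μ] {k a b : ℕ}
    (hab : a + 1 + b = k) (hab' : a + (1 + b) = k)
    {h : (Fin k → S) → ℝ} (hmeas_h : Measurable h) (z : ℝ) (y : Fin b → S) :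
    Gf μ k (a + 1) b hab h z y
      = ∫⁻ t : Fin 1 → S, Gf μ k a (1 + b) hab' h z (jn t y) ∂(Measure.pi fun _ : Fin 1 => μ) := by
  rw [Gf, split_meas μ (measurableSet_Jf hab hmeas_h z y)]
  refine lintegral_congr fun t => ?_
  rw [Gf]
  congr 1
  ext x
  simp only [Set.mem_setOf_eq, Jf_succ hab hab' x t y]

lemma If_cast (μ : Measure S) {k a a' b b' : ℕ} (hab : a + b = k) (hab' : a' + b' = k)
    (h : (Fin k → S) → ℝ) (z : ℝ) (ha : a = a') (hb : b = b') :
    If μ k a b hab h z = If μ k a' b' hab' h z := by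
  subst ha; subst hb; rfl

lemma If_mono (μ : Measure S) [IsProbabilityMeasure μ] {k a b : ℕ}
    (hab : a + 1 + b = k) (hab' : a + (1 + b) = k)
    {h : (Fin k → S) → ℝ} (hmeas_h : Measurable h) (z : ℝ) :
    If μ k (a + 1) b hab h z ≤ If μ k a (1 + b) hab' h z := by
  have hG : Measurable (Gf μ k a (1 + b) hab' h z) := measurable_Gf hab' hmeas_h z
  have hGn : Measurable (fun p : (Fin 1 → S) × (Fin b → S) =>
      Gf μ k a (1 + b) hab' h z (jn p.1 p.2)) := hG.comp measurable_jn
  calc If μ k (a + 1) b hab h z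
      = ∫⁻ y, (∫⁻ t : Fin 1 → S, Gf μ k a (1 + b) hab' h z (jn t y)
            ∂(Measure.pi fun _ : Fin 1 => μ))
          * (∫⁻ t : Fin 1 → S, Gf μ k a (1 + b) hab' h z (jn t y)
            ∂(Measure.pi fun _ : Fin 1 => μ))
          ∂(Measure.pi fun _ : Fin b => μ) := by
        rw [If]; refine lintegral_congr fun y => ?_
        rw [Gf_succ μ hab hab' hmeas_h z y]
    _ ≤ ∫⁻ y, (∫⁻ t : Fin 1 → S, Gf μ k a (1 + b) hab' h z (jn t y)
            * Gf μ k a (1 + b) hab' h z (jn t y)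
          ∂(Measure.pi fun _ : Fin 1 => μ)) ∂(Measure.pi fun _ : Fin b => μ) := by
        refine lintegral_mono fun y => ?_
        exact sq_lintegral_le _ (hG.comp (measurable_jn.comp (measurable_prodMk_right (y := y))))
    _ = ∫⁻ t : Fin 1 → S, ∫⁻ y, Gf μ k a (1 + b) hab' h z (jn t y)
            * Gf μ k a (1 + b) hab' h z (jn t y)
          ∂(Measure.pi fun _ : Fin b => μ) ∂(Measure.pi fun _ : Fin 1 => μ) := by
        refine lintegral_lintegral_swap ?_
        exact ((hGn.comp measurable_swap).mul (hGn.comp measurable_swap)).aemeasurable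
    _ = If μ k a (1 + b) hab' h z := by
        rw [If]; exact (split_lintegral μ (hG.mul hG)).symm

end helpers

section xi

variable {Ω : Type*} [MeasureSpace Ω] {S : Type*} [MeasurableSpace S]

lemma map_pi [IsProbabilityMeasure (ℙ : Measure Ω)] (ξ : ℕ → Ω → S)
    (hmeas : ∀ i, Measurable (ξ i))
    (hindep : iIndepFun ξ ℙ)
    (hident : ∀ i j, Measure.map (ξ i) ℙ = Measure.map (ξ j) ℙ) (m : ℕ) :
    Measure.map (fun ω (i : Fin m) => ξ i ω) ℙ
      = Measure.pi fun _ : Fin m => Measure.map (ξ 0) ℙ := by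
  have hΦ : Measurable (fun ω (i : Fin m) => ξ i ω) :=
    measurable_pi_lambda _ fun i => hmeas i
  refine (Measure.pi_eq fun s hs => ?_).symm
  rw [Measure.map_apply hΦ (MeasurableSet.univ_pi hs)]
  classical
  set S' : ℕ → Set S := fun n => if hn : n < m then s ⟨n, hn⟩ else Set.univ with hS'
  have hpre : (fun ω (i : Fin m) => ξ i ω) ⁻¹' (Set.univ.pi s)
      = ⋂ n ∈ Finset.range m, ξ n ⁻¹' (S' n) := by
    ext ω
    simp only [Set.mem_preimage, Set.mem_pi, Set.mem_univ, forall_true_left, Set.mem_iInter,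
      Finset.mem_range, hS']
    constructor
    · intro H n hn
      simp only [Set.mem_preimage, dif_pos hn]
      exact H ⟨n, hn⟩
    · intro H i
      have := H i i.isLt
      simpa only [Set.mem_preimage, dif_pos i.isLt, Fin.eta] using this
  rw [hpre, hindep.measure_inter_preimage_eq_mul (Finset.range m)
    (fun n hn => by by_cases hnm : n < m <;> simp [hS', hnm, hs, MeasurableSet.univ])]
  rw [← Fin.prod_univ_eq_prod_range (fun n => ℙ (ξ n ⁻¹' S' n)) m]
  refine Finset.prod_congr rfl fun i _ => ?_
  have h1 : S' (i : ℕ) = s i := by simp [hS', i.isLt]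
  rw [h1, ← Measure.map_apply (hmeas i) (hs i), hident (i : ℕ) 0]

lemma prob_eq [IsProbabilityMeasure (ℙ : Measure Ω)] (ξ : ℕ → Ω → S)
    (hmeas : ∀ i, Measurable (ξ i))
    (hindep : iIndepFun ξ ℙ)
    (hident : ∀ i j, Measure.map (ξ i) ℙ = Measure.map (ξ j) ℙ) (m : ℕ)
    {T : Set (Fin m → S)} (hT : MeasurableSet T) :
    ℙ ((fun ω (i : Fin m) => ξ i ω) ⁻¹' T)
      = (Measure.pi fun _ : Fin m => Measure.map (ξ 0) ℙ) T := by
  rw [← map_pi ξ hmeas hindep hident m]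
  exact (Measure.map_apply (f := fun ω (i : Fin m) => ξ i ω) (μ := ℙ)
    (measurable_pi_lambda _ fun i => hmeas i) hT).symm

lemma pnz_eq [IsProbabilityMeasure (ℙ : Measure Ω)] (k : ℕ) (ξ : ℕ → Ω → S)
    (hmeas : ∀ i, Measurable (ξ i))
    (hindep : iIndepFun ξ ℙ)
    (hident : ∀ i j, Measure.map (ξ i) ℙ = Measure.map (ξ j) ℙ)
    (h : (Fin k → S) → ℝ) (hmeas_h : Measurable h) (z : ℝ)
    (a b : ℕ) (hab : a + b = k) :
    ℙ {ω | z < h (fun j => ξ j ω)}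
      = ∫⁻ y : Fin b → S, Gf (Measure.map (ξ 0) ℙ) k a b hab h z y
          ∂(Measure.pi fun _ : Fin b => Measure.map (ξ 0) ℙ) := by
  haveI : IsProbabilityMeasure (Measure.map (ξ 0) ℙ) :=
    Measure.isProbabilityMeasure_map (hmeas 0).aemeasurable
  have hc : Measurable (fun v : Fin (a + b) → S => (fun j : Fin k =>
      v ⟨(j : ℕ), by have := j.isLt; omega⟩)) :=
    measurable_pi_lambda _ fun j => measurable_pi_apply _
  have hT : MeasurableSet {v : Fin (a + b) → S |
      z < h (fun j : Fin k => v ⟨(j : ℕ), by have := j.isLt; omega⟩)} :=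
    (hmeas_h.comp hc) measurableSet_Ioi
  have hev : {ω | z < h (fun j => ξ j ω)}
      = (fun ω (i : Fin (a + b)) => ξ i ω) ⁻¹' {v : Fin (a + b) → S |
          z < h (fun j : Fin k => v ⟨(j : ℕ), by have := j.isLt; omega⟩)} := rfl
  rw [hev, prob_eq ξ hmeas hindep hident (a + b) hT, split_meas _ hT]
  refine lintegral_congr fun y => ?_
  rw [Gf]
  congr 1

end xi

section key

variable {Ω : Type*} [MeasureSpace Ω] {S : Type*} [MeasurableSpace S]

lemma key_eq [IsProbabilityMeasure (ℙ : Measure Ω)] (k : ℕ) (ξ : ℕ → Ω → S)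
    (hmeas : ∀ i, Measurable (ξ i))
    (hindep : iIndepFun ξ ℙ)
    (hident : ∀ i j, Measure.map (ξ i) ℙ = Measure.map (ξ j) ℙ)
    (h : (Fin k → S) → ℝ) (hmeas_h : Measurable h)
    (hsymm : ∀ (σ : Equiv.Perm (Fin k)) (x : Fin k → S), h (x ∘ σ) = h x)
    (z : ℝ) (r : ℕ) (hr1 : 1 ≤ r) (hrk : r ≤ k) (har : k - r + r = k) :
    ℙ {ω | z < h (fun j => ξ j ω) ∧ z < h (fun j => ξ (k - r + j) ω)}
      = If (Measure.map (ξ 0) ℙ) k (k - r) r har h z := by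
  classical
  set μ := Measure.map (ξ 0) ℙ with hμ
  haveI : IsProbabilityMeasure μ := Measure.isProbabilityMeasure_map (hmeas 0).aemeasurable
  haveI : NeZero k := ⟨by omega⟩
  -- the big index set
  set T : Set (Fin (k - r + (r + (k - r))) → S) :=
    {v | z < h (fun j : Fin k => v ⟨(j : ℕ), by have := j.isLt; omega⟩)
        ∧ z < h (fun j : Fin k => v ⟨k - r + (j : ℕ), by have := j.isLt; omega⟩)} with hTdef
  have hc1 : Measurable (fun v : Fin (k - r + (r + (k - r))) → S =>
      (fun j : Fin k => v ⟨(j : ℕ), by have := j.isLt; omega⟩)) :=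
    measurable_pi_lambda _ fun j => measurable_pi_apply _
  have hc2 : Measurable (fun v : Fin (k - r + (r + (k - r))) → S =>
      (fun j : Fin k => v ⟨k - r + (j : ℕ), by have := j.isLt; omega⟩)) :=
    measurable_pi_lambda _ fun j => measurable_pi_apply _
  have hT : MeasurableSet T :=
    ((hmeas_h.comp hc1) measurableSet_Ioi).inter ((hmeas_h.comp hc2) measurableSet_Ioi)
  -- membership identities
  have hmem1 : ∀ (x : Fin (k - r) → S) (y : Fin r → S) (w : Fin (k - r) → S),
      (fun j : Fin k => jn x (jn y w) ⟨(j : ℕ), by have := j.isLt; omega⟩)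
        = Jf k (k - r) r har x y := by
    intro x y w; funext j
    simp only [jn, Jf]
    by_cases hj : (j : ℕ) < k - r
    · simp [hj]
    · simp [hj, show (j : ℕ) - (k - r) < r by have := j.isLt; omega]
  have hmem2 : ∀ (x : Fin (k - r) → S) (y : Fin r → S) (w : Fin (k - r) → S),
      (fun j : Fin k => jn x (jn y w) ⟨k - r + (j : ℕ), by have := j.isLt; omega⟩)
        = fun j : Fin k => if hj : (j : ℕ) < r then y ⟨j, hj⟩
            else w ⟨(j : ℕ) - r, by have := j.isLt; omega⟩ := by
    intro x y w; funext j
    simp only [jn]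
    rw [dif_neg (by first | omega | (simp; omega) | simp)]
    by_cases hj : (j : ℕ) < r
    · rw [dif_pos (by first | omega | (simp; omega) | simp), dif_pos hj]
      exact congrArg y (Fin.ext (by first | omega | (simp; omega) | simp))
    · rw [dif_neg (by first | omega | (simp; omega) | simp), dif_neg hj]
      exact congrArg w (Fin.ext (by first | omega | (simp; omega) | simp))
  -- the symmetry step
  have hsymm2 : ∀ (y : Fin r → S) (w : Fin (k - r) → S),
      h (fun j : Fin k => if hj : (j : ℕ) < r then y ⟨j, hj⟩
          else w ⟨(j : ℕ) - r, by have := j.isLt; omega⟩)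
        = h (Jf k (k - r) r har w y) := by
    intro y w
    set c : Fin k := ⟨k - r, by omega⟩ with hc
    rw [← hsymm (Equiv.addRight c) (Jf k (k - r) r har w y)]
    congr 1
    funext j
    have hval : ((j + c : Fin k) : ℕ)
        = if (j : ℕ) < r then (j : ℕ) + (k - r) else (j : ℕ) - r := by
      rw [Fin.add_def]
      simp only [hc]
      by_cases hj : (j : ℕ) < r
      · rw [if_pos hj, Nat.mod_eq_of_lt (by omega)]
      · rw [if_neg hj, Nat.mod_eq_sub_mod (by omega)]
        have h2 : (j : ℕ) + (k - r) - k = (j : ℕ) - r := by omega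
        rw [h2, Nat.mod_eq_of_lt (by omega)]
    show _ = Jf k (k - r) r har w y (j + c)
    simp only [Jf, hval]
    by_cases hj : (j : ℕ) < r
    · rw [dif_pos hj, dif_neg (by first | omega | (simp [hj]; omega) | simp [hj])]
      exact (congrArg y (Fin.ext (by first | omega | (simp [hj]; omega) | simp [hj]))).symm
    · rw [dif_neg hj, dif_pos (by first | (have := j.isLt; omega) | (simp [hj]; have := j.isLt; omega) | simp [hj])]
      exact (congrArg w (Fin.ext (by first | omega | (simp [hj]; omega) | simp [hj]))).symm
  -- identify the event with a preimage
  have hev : {ω | z < h (fun j => ξ j ω) ∧ z < h (fun j => ξ (k - r + j) ω)}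
      = (fun ω (i : Fin (k - r + (r + (k - r)))) => ξ i ω) ⁻¹' T := rfl
  rw [hev, prob_eq ξ hmeas hindep hident _ hT, split_meas' _ hT]
  have hsplit2 : ∀ x : Fin (k - r) → S,
      (Measure.pi fun _ : Fin (r + (k - r)) => μ) {u | jn x u ∈ T}
        = ∫⁻ y : Fin r → S, (Measure.pi fun _ : Fin (k - r) => μ) {w | jn x (jn y w) ∈ T}
            ∂(Measure.pi fun _ : Fin r => μ) := by
    intro x
    have hTx : MeasurableSet {u : Fin (r + (k - r)) → S | jn x u ∈ T} :=
      (measurable_jn.comp (measurable_prodMk_left (x := x))) hT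
    rw [split_meas' μ hTx]
    rfl
  simp only [← hμ, hsplit2]
  have hφ : Measurable (fun q : ((Fin (k - r) → S) × (Fin r → S)) × (Fin (k - r) → S) =>
      jn q.1.1 (jn q.1.2 q.2)) :=
    measurable_jn.comp ((measurable_fst.comp measurable_fst).prodMk
      (measurable_jn.comp ((measurable_snd.comp measurable_fst).prodMk measurable_snd)))
  rw [lintegral_lintegral_swap ((measurable_measure_prodMk_left (hφ hT)).aemeasurable)]
  rw [If]
  refine lintegral_congr fun y => ?_
  have hiff : ∀ (x w : Fin (k - r) → S), (jn x (jn y w) ∈ T)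
      ↔ (z < h (Jf k (k - r) r har x y) ∧ z < h (Jf k (k - r) r har w y)) := by
    intro x w
    rw [hTdef]
    simp only [Set.mem_setOf_eq, hmem1 x y w, hmem2 x y w, hsymm2 y w]
  have hF : ∀ x : Fin (k - r) → S,
      (Measure.pi fun _ : Fin (k - r) => μ) {w | jn x (jn y w) ∈ T}
        = Set.indicator {x' : Fin (k - r) → S | z < h (Jf k (k - r) r har x' y)}
            (fun _ => Gf μ k (k - r) r har h z y) x := by
    intro x
    by_cases hx : z < h (Jf k (k - r) r har x y)
    · rw [Set.indicator_of_mem (show x ∈ {x' : Fin (k - r) → S | z < h (Jf k (k - r) r har x' y)} from hx), Gf]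
      congr 1
      ext w
      simp only [Set.mem_setOf_eq, hiff x w, hx, true_and]
    · rw [Set.indicator_of_notMem (show x ∉ {x' : Fin (k - r) → S | z < h (Jf k (k - r) r har x' y)} from hx)]
      have hempty : {w : Fin (k - r) → S | jn x (jn y w) ∈ T} = ∅ := by
        ext w
        simp only [Set.mem_setOf_eq, hiff x w, Set.mem_empty_iff_false, iff_false]
        exact fun hcon => hx hcon.1
      rw [hempty, measure_empty]
  rw [lintegral_congr hF,
    lintegral_indicator_const (measurableSet_Jf har hmeas_h z y)]
  rfl

end key

open MeasureTheory ProbabilityTheory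

variable {Ω : Type*} [MeasureSpace Ω] {S : Type*} [MeasurableSpace S]

theorem stmt_19 [IsProbabilityMeasure (ℙ : Measure Ω)]
    (k : ℕ) (hk : 0 < k) (ξ : ℕ → Ω → S)
    (hmeas : ∀ i, Measurable (ξ i))
    (hindep : iIndepFun ξ ℙ)
    (hident : ∀ i j, Measure.map (ξ i) ℙ = Measure.map (ξ j) ℙ)
    (h : (Fin k → S) → ℝ) (hmeas_h : Measurable h)
    (hsymm : ∀ (σ : Equiv.Perm (Fin k)) (x : Fin k → S), h (x ∘ σ) = h x)
    (z : ℝ) (hp : 0 < pnz k ξ h z) :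
    pnz k ξ h z ≤ taunz k ξ h z 1 ∧
      (∀ r, 1 ≤ r → r < k → taunz k ξ h z r ≤ taunz k ξ h z (r + 1)) ∧
      taunz k ξ h z k = 1 := by
  classical
  set μ := Measure.map (ξ 0) ℙ with hμ
  haveI : IsProbabilityMeasure μ := Measure.isProbabilityMeasure_map (hmeas 0).aemeasurable
  refine ⟨?_, ?_, ?_⟩
  · -- pnz ≤ taunz 1
    have h1k : (k - 1) + 1 = k := by omega
    have hpe := pnz_eq k ξ hmeas hindep hident h hmeas_h z (k - 1) 1 h1k
    have hke := key_eq k ξ hmeas hindep hident h hmeas_h hsymm z 1 le_rfl hk h1k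
    have hcs : ℙ {ω | z < h (fun j => ξ j ω)} * ℙ {ω | z < h (fun j => ξ j ω)}
        ≤ ℙ {ω | z < h (fun j => ξ j ω) ∧ z < h (fun j => ξ (k - 1 + j) ω)} := by
      rw [hpe, hke, If]
      exact sq_lintegral_le _ (measurable_Gf h1k hmeas_h z)
    have hfin : ℙ {ω | z < h (fun j => ξ j ω) ∧ z < h (fun j => ξ (k - 1 + j) ω)} ≠ ⊤ :=
      measure_ne_top _ _
    have hreal : pnz k ξ h z * pnz k ξ h z
        ≤ (ℙ {ω | z < h (fun j => ξ j ω) ∧ z < h (fun j => ξ (k - 1 + j) ω)}).toReal := by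
      rw [pnz, ← ENNReal.toReal_mul]
      exact ENNReal.toReal_mono hfin hcs
    rw [taunz]
    calc pnz k ξ h z
        = (pnz k ξ h z)⁻¹ * (pnz k ξ h z * pnz k ξ h z) := by field_simp
      _ ≤ (pnz k ξ h z)⁻¹ *
          (ℙ {ω | z < h (fun j => ξ j ω) ∧ z < h (fun j => ξ (k - 1 + j) ω)}).toReal :=
          mul_le_mul_of_nonneg_left hreal (inv_nonneg.2 hp.le)
  · -- monotone
    intro r hr1 hrk
    have har : k - r + r = k := by omega
    have har' : k - (r + 1) + (r + 1) = k := by omega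
    have hke1 := key_eq k ξ hmeas hindep hident h hmeas_h hsymm z r hr1 (by omega) har
    have hke2 := key_eq k ξ hmeas hindep hident h hmeas_h hsymm z (r + 1) (by omega)
      (by omega) har'
    have hab1 : (k - (r + 1)) + 1 + r = k := by omega
    have hab2 : (k - (r + 1)) + (1 + r) = k := by omega
    have hmono : ℙ {ω | z < h (fun j => ξ j ω) ∧ z < h (fun j => ξ (k - r + j) ω)}
        ≤ ℙ {ω | z < h (fun j => ξ j ω) ∧ z < h (fun j => ξ (k - (r + 1) + j) ω)} := by
      rw [hke1, hke2]
      calc If μ k (k - r) r har h z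
          = If μ k ((k - (r + 1)) + 1) r hab1 h z := If_cast μ _ _ h z (by omega) rfl
        _ ≤ If μ k (k - (r + 1)) (1 + r) hab2 h z := If_mono μ hab1 hab2 hmeas_h z
        _ = If μ k (k - (r + 1)) (r + 1) har' h z := If_cast μ _ _ h z rfl (by omega)
    rw [taunz, taunz]
    refine mul_le_mul_of_nonneg_left ?_ (inv_nonneg.2 (le_of_lt hp))
    exact ENNReal.toReal_mono (measure_ne_top _ _) hmono
  · -- taunz k = 1
    have hset : {ω | z < h (fun j => ξ j ω) ∧ z < h (fun j => ξ (k - k + j) ω)}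
        = {ω | z < h (fun j => ξ j ω)} := by
      ext ω
      simp only [Set.mem_setOf_eq, Nat.sub_self, Nat.zero_add, and_self]
    rw [taunz, hset, ← pnz]
    exact inv_mul_cancel₀ hp.ne'
end
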